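/- Let d = r^2 + s^2 be a sum of two squares (r, s integers). If the equation s*m^2 - 2*r*m*n - s*n^2 = ±1 has an integer solution (m, n), then x^2 - d*y^2 = -1 has an integer solution with y = m^2 + n^2. -/
import Mathlib

theorem hart_proposition (d r s m n : ℤ) (hd : d = r^2 + s^2)
    (h : s*m^2 - 2*r*m*n - s*n^2 = 1 ∨ s*m^2 - 2*r*m*n - s*n^2 = -1) :
    ∃ x : ℤ, x^2 - d*(m^2 + n^2)^2 = -1 := by
  refine ⟨r*(m^2 - n^2) + 2*s*m*n, ?_⟩
  have hA : (s*m^2 - 2*r*m*n - s*n^2)^2 = 1 := by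
    rcases h with h | h <;> rw [h] <;> ring
  subst hd
  linear_combination -hA
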